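/- Exchangeability coverage identity for HCP: Let Z̃_1,…,Z̃_{K+1} be a hierarchically exchangeable sequence in 𝒵̃ with group sizes N_k, let s : 𝒵 → ℝ be a fixed measurable score function, and let q : 𝒵̃^{K+1} → ℝ be a measurable function that is invariant under any permutation of its K+1 group arguments and under any permutation of the entries within any single group argument. Then P( s(Z_{K+1,1}) ≤ q(Z̃_1,…,Z̃_{K+1}) ) = E[ (1/(K+1)) Σ_{k=1}^{K+1} (1/N_k) Σ_{i=1}^{N_k} 1{ s(Z_{k,i}) ≤ q(Z̃_1,…,Z̃_{K+1}) } ]. -/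

import Mathlib

open MeasureTheory ProbabilityTheory
open scoped ENNReal

noncomputable section

/-- Extend a permutation of `Fin m` to `ℕ` by the identity outside `{0, …, m-1}`. -/
def permExt {m : ℕ} (σ : Equiv.Perm (Fin m)) : ℕ → ℕ :=
  fun i => if h : i < m then (σ ⟨i, h⟩ : ℕ) else i

/-- The representation of the groups `0, …, L-1` of a hierarchical data set:
group `k` is recorded as the pair of its size `N k ω` and its sequence of observations. -/
def hierData {Ω 𝒵 : Type*} (L : ℕ) (N : ℕ → Ω → ℕ) (Z : ℕ → ℕ → Ω → 𝒵) :
    Ω → Fin L → ℕ × (ℕ → 𝒵) :=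
  fun ω k => (N k.1 ω, fun i => Z k.1 i ω)

/-- Hierarchical exchangeability (Definition 1.1) of the groups `0, …, L-1`:
(i) the groups are exchangeable with each other, and (ii) for each `k` and each `m`
with `P(N_k = m) > 0`, conditionally on `N_k = m` the first `m` observations within
group `k` are exchangeable. -/
def HierExch {Ω 𝒵 : Type*} [MeasurableSpace Ω] [MeasurableSpace 𝒵] (L : ℕ)
    (P : Measure Ω) (N : ℕ → Ω → ℕ) (Z : ℕ → ℕ → Ω → 𝒵) : Prop :=
  (∀ σ : Equiv.Perm (Fin L),
      Measure.map (fun ω => fun k : Fin L => hierData L N Z ω (σ k)) P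
        = Measure.map (hierData L N Z) P) ∧
  (∀ k, k < L → ∀ m : ℕ, 0 < P {ω | N k ω = m} → ∀ σ : Equiv.Perm (Fin m),
      Measure.map
          (hierData L N fun k' i => if k' = k then Z k' (permExt σ i) else Z k' i)
          (ProbabilityTheory.cond P {ω | N k ω = m})
        = Measure.map (hierData L N Z) (ProbabilityTheory.cond P {ω | N k ω = m}))

/-- An algorithm (or function) of `L` groups is hierarchically symmetric if its output is
unchanged by any permutation of its `L` group arguments and by any permutation of the
entries within any single group argument. -/
def HierInvariant {𝒵 β : Type*} (L : ℕ) (q : (Fin L → ℕ × (ℕ → 𝒵)) → β) : Prop :=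
  (∀ (d : Fin L → ℕ × (ℕ → 𝒵)) (σ : Equiv.Perm (Fin L)), q (fun k => d (σ k)) = q d) ∧
  (∀ (d : Fin L → ℕ × (ℕ → 𝒵)) (k : Fin L) (σ : Equiv.Perm (Fin (d k).1)),
      q (Function.update d k ((d k).1, fun i => (d k).2 (permExt σ i))) = q d)

lemma measurable_hierData {Ω 𝒵 : Type*} [MeasurableSpace Ω] [MeasurableSpace 𝒵]
    (L : ℕ) (N : ℕ → Ω → ℕ) (Z : ℕ → ℕ → Ω → 𝒵)
    (hN : ∀ k, Measurable (N k)) (hZ : ∀ k i, Measurable (Z k i)) :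
    Measurable (hierData L N Z) := by
  apply measurable_pi_lambda
  intro k
  exact (hN k.1).prodMk (measurable_pi_lambda _ fun i => hZ k.1 i)

lemma hierInv_within {𝒵 β : Type*} {L : ℕ} {q : (Fin L → ℕ × (ℕ → 𝒵)) → β}
    (hq : HierInvariant L q) (d : Fin L → ℕ × (ℕ → 𝒵)) (k : Fin L) {m : ℕ}
    (hm : (d k).1 = m) (σ : Equiv.Perm (Fin m)) :
    q (Function.update d k ((d k).1, fun i => (d k).2 (permExt σ i))) = q d := by
  subst hm; exact hq.2 d k σ

/-- **Lemma (Exchangeability coverage identity for HCP).**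
For a hierarchically exchangeable sequence of groups, a fixed measurable score `s` and a
measurable, hierarchically invariant function `q` of the full data set,
`P(s(Z_{K+1,1}) ≤ q) = E[(1/(K+1)) Σ_k (1/N_k) Σ_i 1{s(Z_{k,i}) ≤ q}]`. -/
theorem hcp_exchangeability_identity
    {𝒵 Ω : Type*} [MeasurableSpace 𝒵] [MeasurableSpace Ω]
    (P : Measure Ω) [IsProbabilityMeasure P]
    (K : ℕ)
    (N : ℕ → Ω → ℕ) (Z : ℕ → ℕ → Ω → 𝒵)
    (hN : ∀ k ω, 1 ≤ N k ω)
    (hNmeas : ∀ k, Measurable (N k)) (hZmeas : ∀ k i, Measurable (Z k i))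
    (hexch : HierExch (K + 1) P N Z)
    (s : 𝒵 → ℝ) (hs : Measurable s)
    (q : (Fin (K + 1) → ℕ × (ℕ → 𝒵)) → ℝ) (hq : Measurable q)
    (hqinv : HierInvariant (K + 1) q) :
    P {ω | s (Z K 0 ω) ≤ q (hierData (K + 1) N Z ω)} =
      ∫⁻ ω, (((K + 1 : ℕ) : ℝ≥0∞))⁻¹ *
        ∑ k ∈ Finset.range (K + 1), ((N k ω : ℝ≥0∞))⁻¹ *
          ∑ i ∈ Finset.range (N k ω),
            (if s (Z k i ω) ≤ q (hierData (K + 1) N Z ω) then (1 : ℝ≥0∞) else 0) ∂P := by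

  classical
  set D := hierData (K + 1) N Z with hD_def
  have hD : Measurable D := measurable_hierData (K+1) N Z hNmeas hZmeas
  set T : Fin (K+1) → ℕ → Set (Fin (K+1) → ℕ × (ℕ → 𝒵)) :=
    fun k i => {d | s ((d k).2 i) ≤ q d} with hT_def
  have hTmeas : ∀ (k : Fin (K+1)) (i : ℕ), MeasurableSet (T k i) := fun k i =>
    measurableSet_le (hs.comp ((measurable_pi_apply i).comp
      (measurable_snd.comp (measurable_pi_apply k)))) hq
  -- Step C : group exchangeability
  have stepC : ∀ k : Fin (K+1), P (D ⁻¹' T k 0) = P (D ⁻¹' T (Fin.last K) 0) := by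
    intro k
    set σ : Equiv.Perm (Fin (K+1)) := Equiv.swap k (Fin.last K) with hσ
    have hmap := hexch.1 σ
    have hmeas' : Measurable (fun ω => fun j : Fin (K+1) => D ω (σ j)) :=
      measurable_pi_lambda _ fun j => (measurable_pi_apply (σ j)).comp hD
    have h1 : Measure.map (fun ω => fun j : Fin (K+1) => D ω (σ j)) P (T (Fin.last K) 0)
        = Measure.map D P (T (Fin.last K) 0) := by rw [hmap]
    rw [Measure.map_apply hmeas' (hTmeas _ _), Measure.map_apply hD (hTmeas _ _)] at h1
    have hset : (fun ω => fun j : Fin (K+1) => D ω (σ j)) ⁻¹' T (Fin.last K) 0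
        = D ⁻¹' T k 0 := by
      ext ω
      simp only [Set.mem_preimage, hT_def, Set.mem_setOf_eq]
      rw [hqinv.1 (D ω) σ, hσ, Equiv.swap_apply_right]
    rw [hset] at h1
    exact h1
  -- Step B : within-group exchangeability
  have stepB : ∀ k : Fin (K+1),
      (∫⁻ ω, ((N k.1 ω : ℝ≥0∞))⁻¹ * ∑ i ∈ Finset.range (N k.1 ω),
        (if s (Z k.1 i ω) ≤ q (D ω) then (1 : ℝ≥0∞) else 0) ∂P) = P (D ⁻¹' T k 0) := by
    intro k
    set B : ℕ → Set Ω := fun m => {ω | N k.1 ω = m} with hB_def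
    have hBmeas : ∀ m, MeasurableSet (B m) := fun m => (hNmeas k.1) (measurableSet_singleton m)
    have hBdisj : Pairwise (Function.onFun Disjoint B) := by
      intro a b hab
      simp only [Function.onFun, hB_def]
      refine Set.disjoint_left.mpr ?_
      rintro ω h1 h2
      exact hab ((Set.mem_setOf_eq ▸ h1) ▸ (Set.mem_setOf_eq ▸ h2) ▸ rfl)
    have hBunion : (⋃ m, B m) = Set.univ := by
      ext ω; simp [hB_def]
    -- the key conditional exchangeability step
    have key : ∀ m : ℕ, ∀ i < m, P (B m ∩ D ⁻¹' T k i) = P (B m ∩ D ⁻¹' T k 0) := by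
      intro m i him
      by_cases hPB : P (B m) = 0
      · have h1 : P (B m ∩ D ⁻¹' T k i) = 0 :=
          le_antisymm (le_trans (measure_mono Set.inter_subset_left) hPB.le) (zero_le)
        have h2 : P (B m ∩ D ⁻¹' T k 0) = 0 :=
          le_antisymm (le_trans (measure_mono Set.inter_subset_left) hPB.le) (zero_le)
        rw [h1, h2]
      · have hpos : 0 < P (B m) := pos_iff_ne_zero.mpr hPB
        have hm0 : 0 < m := Nat.lt_of_le_of_lt (Nat.zero_le i) him
        set σ : Equiv.Perm (Fin m) := Equiv.swap ⟨0, hm0⟩ ⟨i, him⟩ with hσ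
        set Z' : ℕ → ℕ → Ω → 𝒵 :=
          fun k' j => if k' = k.1 then Z k' (permExt σ j) else Z k' j with hZ'
        have hmap := hexch.2 k.1 k.2 m hpos σ
        have hZ'meas : ∀ k' j, Measurable (Z' k' j) := by
          intro k' j
          by_cases h : k' = k.1
          · simp only [hZ', h, if_true]; exact hZmeas _ _
          · simp only [hZ', h, if_false]; exact hZmeas _ _
        have hD'meas : Measurable (hierData (K+1) N Z') :=
          measurable_hierData (K+1) N Z' hNmeas hZ'meas
        set Pc := ProbabilityTheory.cond P (B m) with hPc
        have hc : Pc (D ⁻¹' T k i) = Pc ((hierData (K+1) N Z') ⁻¹' T k i) := by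
          have h2 := congrArg (fun μ : Measure (Fin (K+1) → ℕ × (ℕ → 𝒵)) => μ (T k i)) hmap
          rw [Measure.map_apply hD'meas (hTmeas k i), Measure.map_apply hD (hTmeas k i)] at h2
          exact h2.symm
        have hsetEq : B m ∩ (hierData (K+1) N Z') ⁻¹' T k i = B m ∩ D ⁻¹' T k 0 := by
          ext ω
          simp only [Set.mem_inter_iff, Set.mem_preimage, hT_def, Set.mem_setOf_eq, hB_def]
          refine and_congr_right fun hNω => ?_
          have hq' : q (hierData (K+1) N Z' ω) = q (D ω) := by
            have hupd : hierData (K+1) N Z' ω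
                = Function.update (D ω) k ((D ω k).1, fun j => (D ω k).2 (permExt σ j)) := by
              funext k'
              by_cases h : k' = k
              · subst h
                simp only [Function.update_self, hierData, hD_def, hZ', if_pos rfl]
              · simp only [Function.update_of_ne h, hierData, hD_def, hZ',
                  if_neg (Fin.val_ne_of_ne h)]
            rw [hupd]
            exact hierInv_within hqinv (D ω) k hNω σ
          have hz : (hierData (K+1) N Z' ω k).2 i = Z k.1 0 ω := by
            show Z' k.1 i ω = Z k.1 0 ω
            simp only [hZ', if_pos rfl]
            have : permExt σ i = 0 := by
              simp only [permExt, dif_pos him, hσ]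
              rw [show (⟨i, him⟩ : Fin m) = (⟨i, him⟩ : Fin m) from rfl]
              rw [Equiv.swap_apply_right]
            rw [this]
          rw [hz, hq']
          exact Iff.rfl
        have hPBne : P (B m) ≠ ∞ := measure_ne_top P _
        have e1 : P (B m ∩ D ⁻¹' T k i) = P (B m) * Pc (D ⁻¹' T k i) := by
          rw [hPc, ProbabilityTheory.cond_apply (hBmeas m), ← mul_assoc,
            ENNReal.mul_inv_cancel hPB hPBne, one_mul]
        have e2 : Pc ((hierData (K+1) N Z') ⁻¹' T k i)
            = (P (B m))⁻¹ * P (B m ∩ D ⁻¹' T k 0) := by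
          rw [hPc, ProbabilityTheory.cond_apply (hBmeas m), hsetEq]
        rw [e1, hc, e2, ← mul_assoc, ENNReal.mul_inv_cancel hPB hPBne, one_mul]
    -- measurability of the indicators
    have hindmeas : ∀ i : ℕ,
        Measurable (fun ω => if s (Z k.1 i ω) ≤ q (D ω) then (1:ℝ≥0∞) else 0) := fun i =>
      Measurable.ite (measurableSet_le (hs.comp (hZmeas k.1 i)) (hq.comp hD))
        measurable_const measurable_const
    have hindpre : ∀ i : ℕ,
        (fun ω => if s (Z k.1 i ω) ≤ q (D ω) then (1:ℝ≥0∞) else 0)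
          = (D ⁻¹' T k i).indicator (fun _ => 1) := by
      intro i; funext ω
      by_cases h : s (Z k.1 i ω) ≤ q (D ω)
      · rw [if_pos h]
        exact (Set.indicator_of_mem (show ω ∈ D ⁻¹' T k i from h) (fun _ => (1:ℝ≥0∞))).symm
      · rw [if_neg h]
        exact (Set.indicator_of_notMem (show ω ∉ D ⁻¹' T k i from h) (fun _ => (1:ℝ≥0∞))).symm
    -- per-piece integral
    have hm_int : ∀ m : ℕ, (∫⁻ ω in B m, ((N k.1 ω : ℝ≥0∞))⁻¹ *
        ∑ i ∈ Finset.range (N k.1 ω),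
          (if s (Z k.1 i ω) ≤ q (D ω) then (1:ℝ≥0∞) else 0) ∂P)
        = P (B m ∩ D ⁻¹' T k 0) := by
      intro m
      rcases Nat.eq_zero_or_pos m with hm | hm
      · subst hm
        have hBempty : B 0 = ∅ := by
          ext ω
          simp only [hB_def, Set.mem_setOf_eq, Set.mem_empty_iff_false, iff_false]
          intro h
          exact absurd (h ▸ hN k.1 ω) (by norm_num)
        rw [hBempty]
        simp
      · have hcongr : (∫⁻ ω in B m, ((N k.1 ω : ℝ≥0∞))⁻¹ *
            ∑ i ∈ Finset.range (N k.1 ω),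
              (if s (Z k.1 i ω) ≤ q (D ω) then (1:ℝ≥0∞) else 0) ∂P)
            = ∫⁻ ω in B m, ((m : ℝ≥0∞))⁻¹ * ∑ i ∈ Finset.range m,
              (if s (Z k.1 i ω) ≤ q (D ω) then (1:ℝ≥0∞) else 0) ∂P := by
          refine setLIntegral_congr_fun (hBmeas m) (fun ω hω => ?_)
          rw [show N k.1 ω = m from hω]
        have hsummeas : Measurable (fun ω => ∑ i ∈ Finset.range m,
            (if s (Z k.1 i ω) ≤ q (D ω) then (1:ℝ≥0∞) else 0)) :=
          Finset.measurable_sum _ fun i _ => hindmeas i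
        rw [hcongr, lintegral_const_mul _ hsummeas,
          lintegral_finset_sum _ fun i _ => hindmeas i]
        have hone : ∀ i ∈ Finset.range m,
            (∫⁻ ω in B m, (if s (Z k.1 i ω) ≤ q (D ω) then (1:ℝ≥0∞) else 0) ∂P)
            = P (B m ∩ D ⁻¹' T k 0) := by
          intro i hi
          rw [hindpre i,
            show ((D ⁻¹' T k i).indicator fun _ => (1:ℝ≥0∞)) = (D ⁻¹' T k i).indicator 1 from rfl,
            lintegral_indicator_one (hD (hTmeas k i)),
            Measure.restrict_apply (hD (hTmeas k i)), Set.inter_comm]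
          exact key m i (Finset.mem_range.mp hi)
        rw [Finset.sum_congr rfl hone, Finset.sum_const, Finset.card_range, nsmul_eq_mul,
          ← mul_assoc, ENNReal.inv_mul_cancel (by exact_mod_cast hm.ne')
            (ENNReal.natCast_ne_top m), one_mul]
    calc (∫⁻ ω, ((N k.1 ω : ℝ≥0∞))⁻¹ * ∑ i ∈ Finset.range (N k.1 ω),
            (if s (Z k.1 i ω) ≤ q (D ω) then (1 : ℝ≥0∞) else 0) ∂P)
        = ∫⁻ ω in ⋃ m, B m, ((N k.1 ω : ℝ≥0∞))⁻¹ * ∑ i ∈ Finset.range (N k.1 ω),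
            (if s (Z k.1 i ω) ≤ q (D ω) then (1 : ℝ≥0∞) else 0) ∂P := by
          rw [hBunion, setLIntegral_univ]
      _ = ∑' m, ∫⁻ ω in B m, ((N k.1 ω : ℝ≥0∞))⁻¹ * ∑ i ∈ Finset.range (N k.1 ω),
            (if s (Z k.1 i ω) ≤ q (D ω) then (1 : ℝ≥0∞) else 0) ∂P :=
          lintegral_iUnion hBmeas hBdisj _
      _ = ∑' m, P (B m ∩ D ⁻¹' T k 0) := tsum_congr hm_int
      _ = P (⋃ m, B m ∩ D ⁻¹' T k 0) := by
          refine (measure_iUnion ?_ fun m => (hBmeas m).inter (hD (hTmeas k 0))).symm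
          exact fun a b hab =>
            (hBdisj hab).mono Set.inter_subset_left Set.inter_subset_left
      _ = P (D ⁻¹' T k 0) := by rw [← Set.iUnion_inter, hBunion, Set.univ_inter]
  -- measurability of the group terms
  have hgmeas : ∀ kk : ℕ, Measurable (fun ω => ((N kk ω : ℝ≥0∞))⁻¹ *
      ∑ i ∈ Finset.range (N kk ω),
        (if s (Z kk i ω) ≤ q (D ω) then (1:ℝ≥0∞) else 0)) := by
    intro kk
    have h1 : Measurable (fun ω => ((N kk ω : ℝ≥0∞))⁻¹) :=
      (measurable_from_top (f := fun n : ℕ => ((n : ℝ≥0∞))⁻¹)).comp (hNmeas kk)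
    have h2 : Measurable (fun ω => ∑ i ∈ Finset.range (N kk ω),
        (if s (Z kk i ω) ≤ q (D ω) then (1:ℝ≥0∞) else 0)) := by
      have heq : (fun ω => ∑ i ∈ Finset.range (N kk ω),
            (if s (Z kk i ω) ≤ q (D ω) then (1:ℝ≥0∞) else 0))
          = fun ω => ∑' i : ℕ, (if i < N kk ω then
            (if s (Z kk i ω) ≤ q (D ω) then (1:ℝ≥0∞) else 0) else 0) := by
        funext ω
        rw [tsum_eq_sum (s := Finset.range (N kk ω)) (fun i hi => if_neg (by simpa using hi))]
        exact Finset.sum_congr rfl fun i hi => (if_pos (Finset.mem_range.mp hi)).symm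
      rw [heq]
      refine Measurable.ennreal_tsum fun i => ?_
      refine Measurable.ite ((hNmeas kk) measurableSet_Ioi) ?_ measurable_const
      exact Measurable.ite (measurableSet_le (hs.comp (hZmeas kk i)) (hq.comp hD))
        measurable_const measurable_const
    exact h1.mul h2
  -- assemble
  symm
  have hconst : ∀ kk ∈ Finset.range (K+1),
      (∫⁻ ω, ((N kk ω : ℝ≥0∞))⁻¹ * ∑ i ∈ Finset.range (N kk ω),
        (if s (Z kk i ω) ≤ q (D ω) then (1:ℝ≥0∞) else 0) ∂P)
      = P (D ⁻¹' T (Fin.last K) 0) := by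
    intro kk hkk
    have hk' : kk < K + 1 := Finset.mem_range.mp hkk
    rw [stepB ⟨kk, hk'⟩]
    exact stepC ⟨kk, hk'⟩
  calc (∫⁻ ω, (((K + 1 : ℕ) : ℝ≥0∞))⁻¹ *
        ∑ kk ∈ Finset.range (K + 1), ((N kk ω : ℝ≥0∞))⁻¹ *
          ∑ i ∈ Finset.range (N kk ω),
            (if s (Z kk i ω) ≤ q (D ω) then (1 : ℝ≥0∞) else 0) ∂P)
      = (((K + 1 : ℕ) : ℝ≥0∞))⁻¹ * ∫⁻ ω, ∑ kk ∈ Finset.range (K + 1),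
          ((N kk ω : ℝ≥0∞))⁻¹ * ∑ i ∈ Finset.range (N kk ω),
            (if s (Z kk i ω) ≤ q (D ω) then (1 : ℝ≥0∞) else 0) ∂P := by
        exact lintegral_const_mul' _ _ (by simp)
    _ = (((K + 1 : ℕ) : ℝ≥0∞))⁻¹ * ∑ kk ∈ Finset.range (K + 1),
          ∫⁻ ω, ((N kk ω : ℝ≥0∞))⁻¹ * ∑ i ∈ Finset.range (N kk ω),
            (if s (Z kk i ω) ≤ q (D ω) then (1 : ℝ≥0∞) else 0) ∂P := by
        rw [lintegral_finset_sum _ fun kk _ => hgmeas kk]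
    _ = (((K + 1 : ℕ) : ℝ≥0∞))⁻¹ * ∑ kk ∈ Finset.range (K + 1),
          P (D ⁻¹' T (Fin.last K) 0) := by rw [Finset.sum_congr rfl hconst]
    _ = P (D ⁻¹' T (Fin.last K) 0) := by
        rw [Finset.sum_const, Finset.card_range, nsmul_eq_mul, ← mul_assoc,
          ENNReal.inv_mul_cancel (by exact_mod_cast (Nat.succ_ne_zero K))
            (ENNReal.natCast_ne_top (K+1)), one_mul]
    _ = P {ω | s (Z K 0 ω) ≤ q (hierData (K + 1) N Z ω)} := rfl
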